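/- For every integer n ≥ 1: (i) for every integer k ≥ 0, A(n,k) = ((2n)!/(2^{2n}·6^{n})) · ∑_{l=1}^{n} l · C(k,l) · P(n+1−l, n); and (ii) for every integer l with 1 ≤ l ≤ n, P(n+1−l, n) = (2^{2n}·6^{n}·(−1)^{l}/(l·(2n)!)) · ∑_{k=1}^{l} (−1)^{k} · C(l,k) · A(n,k). -/

import Mathlib

/-- `A(n,k) := (2·(2n)!/(2n+k)!) · ∑_{j=0}^{⌊k/2⌋} (−1)^j · C(k,j) · (k/2 − j)^{k+2n}` in `ℚ`. -/
def A (n k : ℕ) : ℚ :=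
  (2 * (Nat.factorial (2 * n) : ℚ) / (Nat.factorial (2 * n + k) : ℚ)) *
    ∑ j ∈ Finset.range (k / 2 + 1),
      (-1 : ℚ) ^ j * (Nat.choose k j : ℚ) * ((k : ℚ) / 2 - (j : ℚ)) ^ (k + 2 * n)

/-- Riordan's coefficients `a(n,l)`: `a(0,0) = 1`, `a(n,0) = 0` for `n ≥ 1`, and for `l ≥ 1`,
`a(n,l) = ∑_{i=l−1}^{n−1} a(i,l−1) · C(2n+l−1, 2n−2i)`. -/
def a : ℕ → ℕ → ℚ
  | 0, 0 => 1
  | _ + 1, 0 => 0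
  | n, l + 1 => ∑ i ∈ Finset.Ico l n, a i l * (Nat.choose (2 * n + l) (2 * n - 2 * i) : ℚ)

/-- The P-polynomial values `P(j,n) := 6^n · a(n, n+1−j) / ((2n)! · (n+1−j) · C(3n+1−j, 2n))`
(for `1 ≤ j ≤ n`). -/
def P (j n : ℕ) : ℚ :=
  6 ^ n * a n (n + 1 - j) /
    ((Nat.factorial (2 * n) : ℚ) * ((n + 1 - j : ℕ) : ℚ) *
      (Nat.choose (3 * n + 1 - j) (2 * n) : ℚ))

open PowerSeries Finset

lemma a_eq_zero_of_lt {n l : ℕ} (h : n < l) : a n l = 0 := by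
  match l, h with
  | l + 1, h =>
    rw [a]
    rw [Finset.Ico_eq_empty (by omega), Finset.sum_empty]

noncomputable def Ec (c : ℚ) : ℚ⟦X⟧ := rescale c (PowerSeries.exp ℚ)

lemma coeff_Ec (c : ℚ) (m : ℕ) : coeff (R := ℚ) m (Ec c) = c ^ m / m.factorial := by
  simp [Ec, coeff_rescale, coeff_exp]
  ring

lemma Ec_mul (b c : ℚ) : Ec b * Ec c = Ec (b + c) := exp_mul_exp_eq_exp_add b c

lemma Ec_pow (c : ℚ) (t : ℕ) : (Ec c) ^ t = Ec (t * c) := by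
  induction t with
  | zero => simp [Ec, rescale_zero]
  | succ t ih =>
    rw [pow_succ, ih, Ec_mul]
    push_cast
    ring_nf

noncomputable def u : ℚ⟦X⟧ := (PowerSeries.C (R := ℚ)) (1/2) * (Ec 1 - Ec (-1)) - X

lemma coeff_u (m : ℕ) :
    coeff (R := ℚ) m u = if m % 2 = 1 ∧ m ≠ 1 then (1 : ℚ) / m.factorial else 0 := by
  simp only [u, map_sub, coeff_C_mul, coeff_Ec, coeff_X]
  rcases Nat.even_or_odd m with he | ho
  · have h1 : (-1 : ℚ) ^ m = 1 := he.neg_one_pow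
    have h2 : m % 2 = 0 := Nat.even_iff.mp he
    have h3 : m ≠ 1 := by omega
    simp [h1, h2, h3]
  · have h1 : (-1 : ℚ) ^ m = -1 := ho.neg_one_pow
    have h2 : m % 2 = 1 := Nat.odd_iff.mp ho
    by_cases h3 : m = 1
    · subst h3; norm_num
    · simp [h1, h2, h3]
      ring

lemma coeff_Du (j : ℕ) :
    coeff (R := ℚ) j (d⁄dX ℚ u) = if j % 2 = 0 ∧ j ≠ 0 then (1 : ℚ) / j.factorial else 0 := by
  rw [PowerSeries.coeff_derivative, coeff_u]
  have h : (j + 1).factorial = (j + 1) * j.factorial := Nat.factorial_succ j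
  by_cases hj : j % 2 = 0 ∧ j ≠ 0
  · rw [if_pos (by omega : (j+1) % 2 = 1 ∧ j + 1 ≠ 1), if_pos hj, h]
    have : (j : ℚ) + 1 ≠ 0 := by positivity
    have hf : (j.factorial : ℚ) ≠ 0 := Nat.cast_ne_zero.mpr j.factorial_ne_zero
    field_simp
    push_cast; ring
  · rw [if_neg (by omega), if_neg hj, zero_mul]

noncomputable def fc (l m : ℕ) : ℚ :=
  if (m + l) % 2 = 0 then a ((m - l) / 2) l * l.factorial / m.factorial else 0

lemma constantCoeff_u : constantCoeff (R := ℚ) u = 0 := by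
  have := coeff_u 0
  simpa using this

lemma coeff_u_pow (l : ℕ) : ∀ m, coeff (R := ℚ) m (u ^ l) = fc l m := by
  induction l with
  | zero =>
    intro m
    rw [pow_zero, coeff_one, fc]
    rcases Nat.eq_zero_or_pos m with h | h
    · subst h; simp [a]
    · rw [if_neg (by omega)]
      by_cases hp : (m + 0) % 2 = 0
      · rw [if_pos hp]
        obtain ⟨t, ht⟩ : ∃ t, m / 2 = t + 1 := ⟨m / 2 - 1, by omega⟩
        rw [Nat.sub_zero, ht]
        have : a (t + 1) 0 = 0 := rfl
        rw [this]; ring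
      · rw [if_neg hp]
  | succ l ih =>
    intro m
    match m with
    | 0 =>
      rw [coeff_zero_eq_constantCoeff, map_pow, constantCoeff_u, zero_pow (by omega), fc]
      have h0 : a ((0 - (l + 1)) / 2) (l + 1) = 0 := a_eq_zero_of_lt (by omega)
      rw [h0]
      split <;> ring
    | M + 1 =>
      have hMne : ((M : ℚ) + 1) ≠ 0 := by positivity
      have hder : coeff (R := ℚ) (M + 1) (u ^ (l + 1)) * (M + 1) =
          coeff (R := ℚ) M (d⁄dX ℚ (u ^ (l + 1))) := (PowerSeries.coeff_derivative _ _).symm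
      have hleib : d⁄dX ℚ (u ^ (l + 1)) = (l + 1) • (u ^ l * d⁄dX ℚ u) := by
        rw [Derivation.leibniz_pow]
        simp [smul_eq_mul]
      have hsum : coeff (R := ℚ) M (u ^ l * d⁄dX ℚ u) =
          ∑ i ∈ range (M + 1), fc l i * coeff (R := ℚ) (M - i) (d⁄dX ℚ u) := by
        rw [PowerSeries.coeff_mul, Finset.Nat.sum_antidiagonal_eq_sum_range_succ_mk]
        exact Finset.sum_congr rfl fun i _ => by rw [ih]
      have key : coeff (R := ℚ) (M + 1) (u ^ (l + 1)) * (M + 1) =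
          (l + 1) * ∑ i ∈ range (M + 1), fc l i * coeff (R := ℚ) (M - i) (d⁄dX ℚ u) := by
        rw [hder, hleib, map_nsmul, hsum, nsmul_eq_mul]
        push_cast; ring
      -- now compute the RHS
      have hgoal : fc (l + 1) (M + 1) * (M + 1) =
          (l + 1) * ∑ i ∈ range (M + 1), fc l i * coeff (R := ℚ) (M - i) (d⁄dX ℚ u) := by
        by_cases hpar : (M + l) % 2 = 0
        · by_cases hMl : M < l
          · -- everything vanishes
            have h1 : fc (l + 1) (M + 1) = 0 := by
              rw [fc, if_pos (by omega)]
              have : (M + 1 - (l + 1)) / 2 = 0 := by omega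
              rw [this, a_eq_zero_of_lt (by omega)]; ring
            rw [h1, Finset.sum_eq_zero, mul_zero, zero_mul]
            intro i hi
            simp only [Finset.mem_range] at hi
            have hl1 : 1 ≤ l := by omega
            by_cases hip : (i + l) % 2 = 0
            · have : fc l i = 0 := by
                rw [fc, if_pos hip]
                have : (i - l) / 2 = 0 := by omega
                rw [this, a_eq_zero_of_lt (by omega)]; ring
              rw [this, zero_mul]
            · rw [fc, if_neg hip, zero_mul]
          · -- main case : M = 2n + l
            set n := (M - l) / 2 with hn
            have hM : M = 2 * n + l := by omega
            -- the sum localises to i = l + 2t, t < n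
            have himg : (range n).image (fun t => l + 2 * t) ⊆ range (M + 1) := by
              intro i hi
              simp only [Finset.mem_image, Finset.mem_range] at hi ⊢
              obtain ⟨t, ht, rfl⟩ := hi; omega
            have hvan : ∀ i ∈ range (M + 1),
                i ∉ (range n).image (fun t => l + 2 * t) →
                fc l i * coeff (R := ℚ) (M - i) (d⁄dX ℚ u) = 0 := by
              intro i hi hni
              simp only [Finset.mem_range] at hi
              simp only [Finset.mem_image, Finset.mem_range] at hni
              push_neg at hni
              by_cases hip : (i + l) % 2 = 0
              · by_cases hil : i < l
                · have : fc l i = 0 := by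
                    rw [fc, if_pos hip]
                    have h2 : (i - l) / 2 = 0 := by omega
                    rw [h2, a_eq_zero_of_lt (by omega)]; ring
                  rw [this, zero_mul]
                · push_neg at hil
                  set t := (i - l) / 2 with htdef
                  have hit : i = l + 2 * t := by omega
                  have htn : ¬ t < n := fun h => hni t h hit.symm
                  have : M - i = 0 := by omega
                  rw [this, coeff_Du, if_neg (by omega), mul_zero]
              · rw [fc, if_neg hip, zero_mul]
            rw [← Finset.sum_subset himg hvan,
              Finset.sum_image (fun x _ y _ h => by omega : ∀ x ∈ range n, ∀ y ∈ range n,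
                l + 2 * x = l + 2 * y → x = y)]
            -- compute each term
            have hterm : ∀ t ∈ range n,
                fc l (l + 2 * t) * coeff (R := ℚ) (M - (l + 2 * t)) (d⁄dX ℚ u) =
                a t l * l.factorial / ((l + 2 * t).factorial * (2 * n - 2 * t).factorial) := by
              intro t ht
              simp only [Finset.mem_range] at ht
              have h1 : fc l (l + 2 * t) = a t l * l.factorial / (l + 2 * t).factorial := by
                rw [fc, if_pos (by omega), show (l + 2 * t - l) / 2 = t by omega]
              have h2 : M - (l + 2 * t) = 2 * n - 2 * t := by omega
              rw [h1, h2, coeff_Du, if_pos (by constructor <;> omega)]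
              have hf1 : ((l + 2 * t).factorial : ℚ) ≠ 0 := Nat.cast_ne_zero.mpr (Nat.factorial_ne_zero _)
              have hf2 : ((2 * n - 2 * t).factorial : ℚ) ≠ 0 := Nat.cast_ne_zero.mpr (Nat.factorial_ne_zero _)
              field_simp
            rw [Finset.sum_congr rfl hterm]
            -- now use the recurrence for a
            have harec : a n (l + 1) = ∑ i ∈ Finset.Ico l n, a i l * (Nat.choose (2 * n + l) (2 * n - 2 * i) : ℚ) := by
              rw [a]
            have hfc : fc (l + 1) (M + 1) = a n (l + 1) * (l + 1).factorial / (M + 1).factorial := by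
              rw [fc, if_pos (by omega)]
              congr 3
              omega
            have hext : ∑ i ∈ Finset.Ico l n, a i l * ((2 * n + l).choose (2 * n - 2 * i) : ℚ) =
                ∑ i ∈ range n, a i l * ((2 * n + l).choose (2 * n - 2 * i) : ℚ) := by
              apply Finset.sum_subset
              · intro x hx
                simp only [Finset.mem_Ico] at hx
                simp only [Finset.mem_range]
                omega
              · intro t ht hnt
                simp only [Finset.mem_range] at ht
                simp only [Finset.mem_Ico] at hnt
                rw [a_eq_zero_of_lt (by omega), zero_mul]
            rw [hfc, harec, hext, Finset.sum_mul, Finset.sum_div, Finset.sum_mul, Finset.mul_sum]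
            apply Finset.sum_congr rfl
            intro t ht
            simp only [Finset.mem_range] at ht
            -- scalar identity
            have hch : ((2 * n + l).choose (2 * n - 2 * t) : ℚ) =
                ((2 * n + l).factorial : ℚ) / ((2 * n - 2 * t).factorial * (l + 2 * t).factorial) := by
              rw [Nat.cast_choose ℚ (by omega : 2 * n - 2 * t ≤ 2 * n + l),
                show 2 * n + l - (2 * n - 2 * t) = l + 2 * t from by omega]
            have hM1 : ((M + 1).factorial : ℚ) = (M + 1) * (2 * n + l).factorial := by
              rw [Nat.factorial_succ, hM]
              push_cast; ring
            have hl1 : ((l + 1).factorial : ℚ) = (l + 1) * l.factorial := by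
              rw [Nat.factorial_succ]; push_cast; ring
            have hf1 : ((l + 2 * t).factorial : ℚ) ≠ 0 := Nat.cast_ne_zero.mpr (Nat.factorial_ne_zero _)
            have hf2 : ((2 * n - 2 * t).factorial : ℚ) ≠ 0 := Nat.cast_ne_zero.mpr (Nat.factorial_ne_zero _)
            have hf3 : ((2 * n + l).factorial : ℚ) ≠ 0 := Nat.cast_ne_zero.mpr (Nat.factorial_ne_zero _)
            have hM1ne : ((M : ℚ) + 1) ≠ 0 := by positivity
            rw [hch, hM1, hl1]
            field_simp
        · -- parity mismatch: both sides vanish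
          have h1 : fc (l + 1) (M + 1) = 0 := by rw [fc, if_neg (by omega)]
          rw [h1, Finset.sum_eq_zero, mul_zero, zero_mul]
          intro i hi
          simp only [Finset.mem_range] at hi
          by_cases hip : (i + l) % 2 = 0
          · rw [coeff_Du, if_neg (by omega), mul_zero]
          · rw [fc, if_neg hip, zero_mul]
      exact mul_right_cancel₀ hMne (key.trans hgoal.symm)

lemma s1_eq : Ec 1 - Ec (-1) = 2 * (X + u) := by
  have h2 : (2 : ℚ⟦X⟧) * (PowerSeries.C (R := ℚ)) (1/2) = 1 := by
    rw [(map_ofNat ((PowerSeries.C (R := ℚ))) 2).symm, ← map_mul]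
    norm_num
  have h3 : 2 * (X + u) = 2 * (PowerSeries.C (R := ℚ)) (1/2) * (Ec 1 - Ec (-1)) := by
    rw [u]; ring
  rw [h3, h2, one_mul]

lemma coeff_sk (k m : ℕ) :
    coeff (R := ℚ) m ((Ec (1/2) - Ec (-(1/2) : ℚ)) ^ k) * m.factorial
      = ∑ j ∈ range (k + 1), (-1 : ℚ) ^ j * (k.choose j : ℚ) * ((k : ℚ) / 2 - j) ^ m := by
  have hsub : Ec (1/2) - Ec (-(1/2) : ℚ) = -Ec (-(1/2) : ℚ) + Ec (1/2) := by ring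
  rw [hsub, add_pow, map_sum, Finset.sum_mul]
  apply Finset.sum_congr rfl
  intro j hj
  simp only [Finset.mem_range] at hj
  have hjk : j ≤ k := by omega
  have h1 : (-Ec (-(1/2) : ℚ)) ^ j * Ec (1/2) ^ (k - j) * ((k.choose j : ℕ) : ℚ⟦X⟧)
      = (PowerSeries.C (R := ℚ)) ((-1 : ℚ) ^ j * (k.choose j : ℚ)) * Ec ((k : ℚ) / 2 - j) := by
    have hEc : Ec ((j : ℚ) * -(1/2)) * Ec (((k - j : ℕ) : ℚ) * (1/2)) = Ec ((k : ℚ)/2 - j) := by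
      rw [Ec_mul, show ((j : ℚ) * -(1/2) + ((k - j : ℕ) : ℚ) * (1/2) : ℚ) = (k : ℚ)/2 - j by
        rw [Nat.cast_sub hjk]; ring]
    have hneg : ((-1 : ℚ⟦X⟧) ^ j) = (PowerSeries.C (R := ℚ)) ((-1 : ℚ) ^ j) := by
      rw [map_pow, map_neg, map_one]
    have hnat : ((k.choose j : ℕ) : ℚ⟦X⟧) = (PowerSeries.C (R := ℚ)) ((k.choose j : ℚ)) :=
      (map_natCast ((PowerSeries.C (R := ℚ))) _).symm
    calc (-Ec (-(1/2) : ℚ)) ^ j * Ec (1/2) ^ (k - j) * ((k.choose j : ℕ) : ℚ⟦X⟧)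
        = ((-1 : ℚ⟦X⟧) ^ j * ((k.choose j : ℕ) : ℚ⟦X⟧)) *
          (Ec ((j : ℚ) * -(1/2)) * Ec (((k - j : ℕ) : ℚ) * (1/2))) := by
          rw [neg_pow, Ec_pow, Ec_pow]; ring
      _ = (PowerSeries.C (R := ℚ)) ((-1 : ℚ) ^ j * (k.choose j : ℚ)) * Ec ((k : ℚ)/2 - j) := by
          rw [hEc, hneg, hnat, ← map_mul]
  rw [h1, coeff_C_mul, coeff_Ec]
  have hf : ((m.factorial : ℚ)) ≠ 0 := Nat.cast_ne_zero.mpr m.factorial_ne_zero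
  field_simp

lemma coeff_S_pow_a (n k : ℕ) :
    coeff (R := ℚ) (2 * n + k) ((Ec (1/2) - Ec (-(1/2) : ℚ)) ^ k)
      = ∑ j ∈ range (k + 1),
          (k.choose j : ℚ) * a n (k - j) * (k - j).factorial /
            ((2 * n + (k - j)).factorial * 4 ^ n) := by
  have hS : Ec (1/2) - Ec (-(1/2) : ℚ) = rescale (1/2 : ℚ) (Ec 1 - Ec (-1)) := by
    rw [map_sub]
    unfold Ec
    rw [rescale_rescale, rescale_rescale]
    norm_num
  rw [hS, ← map_pow, coeff_rescale, s1_eq, mul_pow,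
    show ((2 : ℚ⟦X⟧) ^ k) = (PowerSeries.C (R := ℚ)) ((2 : ℚ) ^ k) by
      rw [map_pow, map_ofNat],
    coeff_C_mul, add_pow, map_sum, Finset.mul_sum, Finset.mul_sum]
  apply Finset.sum_congr rfl
  intro j hj
  simp only [Finset.mem_range] at hj
  have hjk : j ≤ k := by omega
  have h1 : X ^ j * u ^ (k - j) * ((k.choose j : ℕ) : ℚ⟦X⟧)
      = (PowerSeries.C (R := ℚ)) ((k.choose j : ℚ)) * (X ^ j * u ^ (k - j)) := by
    rw [show ((k.choose j : ℕ) : ℚ⟦X⟧) = (PowerSeries.C (R := ℚ)) ((k.choose j : ℚ)) from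
      (map_natCast ((PowerSeries.C (R := ℚ))) _).symm]
    ring
  rw [h1, coeff_C_mul,
    show 2 * n + k = (2 * n + (k - j)) + j by omega,
    PowerSeries.coeff_X_pow_mul, coeff_u_pow]
  have h2 : fc (k - j) (2 * n + (k - j)) = a n (k - j) * (k - j).factorial /
      (2 * n + (k - j)).factorial := by
    rw [fc, if_pos (by omega), show (2 * n + (k - j) - (k - j)) / 2 = n by omega]
  rw [h2]
  have hf : ((2 * n + (k - j)).factorial : ℚ) ≠ 0 := Nat.cast_ne_zero.mpr (Nat.factorial_ne_zero _)
  rw [show 2 * n + (k - j) + j = 2 * n + k by omega]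
  have h4 : ((1 : ℚ)/2) ^ (2 * n + k) * 2 ^ k = (4 ^ n : ℚ)⁻¹ := by
    rw [div_pow, one_pow, show (4 : ℚ) ^ n = 2 ^ (2 * n) by
      rw [show (4 : ℚ) = 2 ^ 2 by norm_num, ← pow_mul], pow_add]
    have h2n : ((2 : ℚ) ^ (2 * n)) ≠ 0 := by positivity
    have h2k : ((2 : ℚ) ^ k) ≠ 0 := by positivity
    field_simp
  linear_combination ((k.choose j : ℚ) * a n (k - j) * ((k - j).factorial : ℚ) /
    ((2 * n + (k - j)).factorial : ℚ)) * h4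

lemma half_to_full (k m : ℕ) (hm : 0 < m) (hpar : m % 2 = k % 2) :
    2 * ∑ j ∈ range (k / 2 + 1), (-1 : ℚ) ^ j * (k.choose j : ℚ) * ((k : ℚ) / 2 - j) ^ m
      = ∑ j ∈ range (k + 1), (-1 : ℚ) ^ j * (k.choose j : ℚ) * ((k : ℚ) / 2 - j) ^ m := by
  set T : ℕ → ℚ := fun j => (-1 : ℚ) ^ j * (k.choose j : ℚ) * ((k : ℚ) / 2 - j) ^ m with hT
  have hsym : ∀ j, j ≤ k → T (k - j) = T j := by
    intro j hj
    simp only [hT]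
    rw [Nat.choose_symm hj]
    have hbase : ((k : ℚ) / 2 - ((k - j : ℕ) : ℚ)) = -((k : ℚ) / 2 - j) := by
      rw [Nat.cast_sub hj]; ring
    rw [hbase, neg_pow ((k : ℚ)/2 - (j : ℚ))]
    have hsign : (-1 : ℚ) ^ (k - j) * (-1 : ℚ) ^ m = (-1 : ℚ) ^ j := by
      rw [← pow_add, neg_one_pow_eq_pow_mod_two, show (k - j + m) % 2 = j % 2 by omega,
        ← neg_one_pow_eq_pow_mod_two]
    linear_combination ((k.choose j : ℚ) * ((k : ℚ)/2 - (j : ℚ)) ^ m) * hsign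
  have hsplit : ∑ j ∈ range (k + 1), T j
      = (∑ j ∈ range (k / 2 + 1), T j) + ∑ j ∈ Finset.Ico (k / 2 + 1) (k + 1), T j := by
    rw [Finset.range_eq_Ico, ← Finset.sum_Ico_consecutive _ (by omega : 0 ≤ k / 2 + 1)
      (by omega : k / 2 + 1 ≤ k + 1), ← Finset.range_eq_Ico]
  have h2 : ∑ j ∈ Finset.Ico (k / 2 + 1) (k + 1), T j = ∑ j ∈ range (k - k / 2), T j := by
    rw [Finset.range_eq_Ico]
    apply Finset.sum_bij' (fun j _ => k - j) (fun j _ => k - j)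
    · intro j hj
      simp only [Finset.mem_Ico] at hj ⊢
      omega
    · intro j hj
      simp only [Finset.mem_Ico] at hj ⊢
      omega
    · intro j hj
      simp only [Finset.mem_Ico] at hj
      omega
    · intro j hj
      simp only [Finset.mem_Ico] at hj
      omega
    · intro j hj
      simp only [Finset.mem_Ico] at hj
      exact (hsym j (by omega)).symm
  rcases Nat.even_or_odd k with he | ho
  · have hk2 : 2 * (k / 2) = k := by
      rcases he with ⟨t, ht⟩; omega
    have hTk2 : T (k / 2) = 0 := by
      simp only [hT]
      have h0 : ((k : ℚ) / 2 - ((k / 2 : ℕ) : ℚ)) = 0 := by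
        have : ((k / 2 : ℕ) : ℚ) * 2 = (k : ℚ) := by
          rw [show ((k : ℚ)) = ((2 * (k / 2) : ℕ) : ℚ) by rw [hk2]]
          push_cast; ring
        linarith
      rw [h0, zero_pow (by omega)]
      ring
    have hkk : k - k / 2 = k / 2 := by omega
    rw [hsplit, h2, hkk, Finset.sum_range_succ]
    simp only [hT] at hTk2 ⊢
    rw [hTk2]
    ring
  · have hkk : k - k / 2 = k / 2 + 1 := by
      rcases ho with ⟨t, ht⟩; omega
    rw [hsplit, h2, hkk, two_mul]
lemma a_zero {n : ℕ} (hn : 1 ≤ n) : a n 0 = 0 := by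
  match n, hn with
  | n + 1, _ => rfl

lemma A_eq (n k : ℕ) (hn : 1 ≤ n) :
    A n k = ∑ l ∈ Finset.Icc 1 n,
      (k.choose l : ℚ) * a n l * l.factorial * (2 * n).factorial /
        ((2 * n + l).factorial * 4 ^ n) := by
  have hfull := half_to_full k (k + 2 * n) (by omega) (by omega)
  have hsk := coeff_sk k (k + 2 * n)
  have hmm : k + 2 * n = 2 * n + k := by ring
  have hcoeff := coeff_S_pow_a n k
  have hfne : ((2 * n + k).factorial : ℚ) ≠ 0 := Nat.cast_ne_zero.mpr (Nat.factorial_ne_zero _)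
  -- A n k = (2n)! * coeff
  have hA : A n k = (2 * n).factorial *
      coeff (R := ℚ) (2 * n + k) ((Ec (1/2) - Ec (-(1/2) : ℚ)) ^ k) := by
    rw [A]
    have : (∑ j ∈ Finset.range (k / 2 + 1),
        (-1 : ℚ) ^ j * (Nat.choose k j : ℚ) * ((k : ℚ) / 2 - (j : ℚ)) ^ (k + 2 * n))
        = (coeff (R := ℚ) (2 * n + k) ((Ec (1/2) - Ec (-(1/2) : ℚ)) ^ k) * (2 * n + k).factorial) / 2 := by
      rw [hmm] at hfull hsk ⊢
      rw [hsk, ← hfull]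
      ring
    rw [this]
    field_simp
  rw [hA, hcoeff, Finset.mul_sum]
  have hrefl : ∑ j ∈ range (k + 1), ((2 * n).factorial : ℚ) *
      ((k.choose j : ℚ) * a n (k - j) * (k - j).factorial /
        ((2 * n + (k - j)).factorial * 4 ^ n))
      = ∑ l ∈ range (k + 1), (k.choose l : ℚ) * a n l * l.factorial * (2 * n).factorial /
        ((2 * n + l).factorial * 4 ^ n) := by
    rw [← Finset.sum_range_reflect (fun l => (k.choose l : ℚ) * a n l * l.factorial *
      (2 * n).factorial / ((2 * n + l).factorial * 4 ^ n)) (k + 1)]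
    apply Finset.sum_congr rfl
    intro j hj
    simp only [Finset.mem_range] at hj
    rw [show k + 1 - 1 - j = k - j by omega, Nat.choose_symm (by omega : j ≤ k)]
    ring
  rw [hrefl]
  -- now change range (k+1) to Icc 1 n
  set g : ℕ → ℚ := fun l => (k.choose l : ℚ) * a n l * l.factorial * (2 * n).factorial /
    ((2 * n + l).factorial * 4 ^ n) with hg
  have h1 : ∑ l ∈ range (k + 1), g l = ∑ l ∈ range (k + n + 2), g l := by
    apply Finset.sum_subset
    · intro x hx
      simp only [Finset.mem_range] at hx ⊢
      omega
    · intro x hx hnx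
      simp only [Finset.mem_range] at hx hnx
      simp only [hg, Nat.choose_eq_zero_of_lt (by omega : k < x), Nat.cast_zero]
      ring
  have h2 : ∑ l ∈ Finset.Icc 1 n, g l = ∑ l ∈ range (k + n + 2), g l := by
    apply Finset.sum_subset
    · intro x hx
      simp only [Finset.mem_Icc] at hx
      simp only [Finset.mem_range]
      omega
    · intro x hx hnx
      simp only [Finset.mem_range] at hx
      simp only [Finset.mem_Icc] at hnx
      rcases Nat.eq_zero_or_pos x with h | h
      · subst h
        simp only [hg, a_zero hn]
        ring
      · simp only [hg, a_eq_zero_of_lt (by omega : n < x)]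
        ring
  rw [h1, ← h2]

lemma alt_inner (l m : ℕ) :
    ∑ k ∈ range (l + 1), (-1 : ℚ) ^ k * (l.choose k : ℚ) * (k.choose m : ℚ)
      = if m = l then (-1 : ℚ) ^ l else 0 := by
  by_cases hml : l < m
  · rw [if_neg (by omega), Finset.sum_eq_zero]
    intro k hk
    simp only [Finset.mem_range] at hk
    rw [Nat.choose_eq_zero_of_lt (by omega : k < m), Nat.cast_zero, mul_zero]
  · push_neg at hml
    have hsub : ∑ k ∈ range (l + 1), (-1 : ℚ) ^ k * (l.choose k : ℚ) * (k.choose m : ℚ)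
        = ∑ k ∈ Finset.Ico m (l + 1), (-1 : ℚ) ^ k * (l.choose k : ℚ) * (k.choose m : ℚ) := by
      symm
      apply Finset.sum_subset
      · intro x hx
        simp only [Finset.mem_Ico] at hx
        simp only [Finset.mem_range]
        omega
      · intro x hx hnx
        simp only [Finset.mem_range] at hx
        simp only [Finset.mem_Ico] at hnx
        rw [Nat.choose_eq_zero_of_lt (by omega : x < m), Nat.cast_zero, mul_zero]
    rw [hsub, Finset.sum_Ico_eq_sum_range]
    have hterm : ∀ t ∈ range (l + 1 - m), (-1 : ℚ) ^ (m + t) * (l.choose (m + t) : ℚ) *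
        ((m + t).choose m : ℚ)
        = ((-1 : ℚ) ^ m * (l.choose m : ℚ)) * ((-1 : ℚ) ^ t * ((l - m).choose t : ℚ)) := by
      intro t ht
      simp only [Finset.mem_range] at ht
      have hcm : l.choose (m + t) * (m + t).choose m = l.choose m * (l - m).choose t := by
        rw [Nat.choose_mul (by omega : m ≤ m + t),
          show m + t - m = t by omega]
      have : ((l.choose (m + t) : ℚ)) * ((m + t).choose m : ℚ) =
          (l.choose m : ℚ) * ((l - m).choose t : ℚ) := by
        exact_mod_cast congrArg (Nat.cast : ℕ → ℚ) hcm
      rw [pow_add]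
      linear_combination ((-1 : ℚ) ^ m * (-1 : ℚ) ^ t) * this
    rw [Finset.sum_congr rfl hterm, ← Finset.mul_sum]
    have halt : ∑ t ∈ range (l + 1 - m), (-1 : ℚ) ^ t * ((l - m).choose t : ℚ)
        = if l - m = 0 then 1 else 0 := by
      have := Int.alternating_sum_range_choose (n := l - m)
      have hcast := congrArg (Int.cast : ℤ → ℚ) this
      push_cast at hcast
      rw [show l + 1 - m = (l - m) + 1 by omega]
      rw [← hcast]
    rw [halt]
    by_cases hm : m = l
    · subst hm
      rw [if_pos rfl, if_pos (by omega), Nat.choose_self, Nat.cast_one]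
      ring
    · rw [if_neg hm, if_neg (by omega)]
      ring


/-- For every `n ≥ 1`:
(i) for every `k ≥ 0`, `A(n,k) = ((2n)!/(2^{2n}·6^n)) · ∑_{l=1}^{n} l · C(k,l) · P(n+1−l, n)`;
(ii) for every `1 ≤ l ≤ n`,
`P(n+1−l, n) = (2^{2n}·6^n·(−1)^l/(l·(2n)!)) · ∑_{k=1}^{l} (−1)^k · C(l,k) · A(n,k)`. -/
theorem A_P_inversion (n : ℕ) (hn : 1 ≤ n) :
    (∀ k : ℕ,
      A n k = ((Nat.factorial (2 * n) : ℚ) / (2 ^ (2 * n) * 6 ^ n)) *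
        ∑ l ∈ Finset.Icc 1 n, (l : ℚ) * (Nat.choose k l : ℚ) * P (n + 1 - l) n) ∧
    (∀ l : ℕ, 1 ≤ l → l ≤ n →
      P (n + 1 - l) n =
        ((2 : ℚ) ^ (2 * n) * 6 ^ n * (-1 : ℚ) ^ l / ((l : ℚ) * (Nat.factorial (2 * n) : ℚ))) *
          ∑ k ∈ Finset.Icc 1 l, (-1 : ℚ) ^ k * (Nat.choose l k : ℚ) * A n k) := by
  have hfact : ((2 * n).factorial : ℚ) ≠ 0 := Nat.cast_ne_zero.mpr (Nat.factorial_ne_zero _)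
  have h2n : ((2 : ℚ) ^ (2 * n)) ≠ 0 := by positivity
  have h6n : ((6 : ℚ) ^ n) ≠ 0 := by positivity
  have part1 : ∀ k : ℕ,
      A n k = ((Nat.factorial (2 * n) : ℚ) / (2 ^ (2 * n) * 6 ^ n)) *
        ∑ l ∈ Finset.Icc 1 n, (l : ℚ) * (Nat.choose k l : ℚ) * P (n + 1 - l) n := by
    intro k
    rw [A_eq n k hn, Finset.mul_sum]
    apply Finset.sum_congr rfl
    intro l hl
    simp only [Finset.mem_Icc] at hl
    rw [P, show n + 1 - (n + 1 - l) = l by omega, show 3 * n + 1 - (n + 1 - l) = 2 * n + l by omega]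
    have hC : ((2 * n + l).choose (2 * n) : ℚ) =
        ((2 * n + l).factorial : ℚ) / ((2 * n).factorial * l.factorial) := by
      rw [Nat.cast_choose ℚ (by omega : 2 * n ≤ 2 * n + l), show 2 * n + l - 2 * n = l by omega]
    have hlf : ((l.factorial : ℚ)) ≠ 0 := Nat.cast_ne_zero.mpr l.factorial_ne_zero
    have h2nl : ((2 * n + l).factorial : ℚ) ≠ 0 := Nat.cast_ne_zero.mpr (Nat.factorial_ne_zero _)
    have hl0 : ((l : ℚ)) ≠ 0 := Nat.cast_ne_zero.mpr (by omega)
    have h4 : ((4 : ℚ) ^ n) = 2 ^ (2 * n) := by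
      rw [show (4 : ℚ) = 2 ^ 2 by norm_num, ← pow_mul]
    rw [hC, h4]
    field_simp
  refine ⟨part1, ?_⟩
  intro l hl1 hln
  have hA0 : A n 0 = 0 := by
    rw [part1 0]
    rw [Finset.sum_eq_zero, mul_zero]
    intro m hm
    simp only [Finset.mem_Icc] at hm
    rw [Nat.choose_eq_zero_of_lt (by omega : 0 < m), Nat.cast_zero]
    ring
  have hsum : ∑ k ∈ Finset.Icc 1 l, (-1 : ℚ) ^ k * (l.choose k : ℚ) * A n k
      = ∑ k ∈ range (l + 1), (-1 : ℚ) ^ k * (l.choose k : ℚ) * A n k := by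
    rw [Finset.range_eq_Ico, Finset.sum_eq_sum_Ico_succ_bot (by omega : 0 < l + 1)]
    rw [hA0, mul_zero, zero_add, Finset.Ico_add_one_right_eq_Icc]
  have hswap : ∑ k ∈ range (l + 1), (-1 : ℚ) ^ k * (l.choose k : ℚ) * A n k
      = ((Nat.factorial (2 * n) : ℚ) / (2 ^ (2 * n) * 6 ^ n)) *
          ∑ m ∈ Finset.Icc 1 n, (m : ℚ) * P (n + 1 - m) n *
            (∑ k ∈ range (l + 1), (-1 : ℚ) ^ k * (l.choose k : ℚ) * (k.choose m : ℚ)) := by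
    calc ∑ k ∈ range (l + 1), (-1 : ℚ) ^ k * (l.choose k : ℚ) * A n k
        = ∑ k ∈ range (l + 1), ∑ m ∈ Finset.Icc 1 n,
            ((Nat.factorial (2 * n) : ℚ) / (2 ^ (2 * n) * 6 ^ n)) *
              ((m : ℚ) * P (n + 1 - m) n * ((-1 : ℚ) ^ k * (l.choose k : ℚ) * (k.choose m : ℚ))) := by
          apply Finset.sum_congr rfl
          intro k _
          rw [part1 k, Finset.mul_sum, Finset.mul_sum]
          apply Finset.sum_congr rfl
          intro m _
          ring
      _ = ∑ m ∈ Finset.Icc 1 n, ∑ k ∈ range (l + 1),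
            ((Nat.factorial (2 * n) : ℚ) / (2 ^ (2 * n) * 6 ^ n)) *
              ((m : ℚ) * P (n + 1 - m) n * ((-1 : ℚ) ^ k * (l.choose k : ℚ) * (k.choose m : ℚ))) :=
          Finset.sum_comm
      _ = ((Nat.factorial (2 * n) : ℚ) / (2 ^ (2 * n) * 6 ^ n)) *
          ∑ m ∈ Finset.Icc 1 n, (m : ℚ) * P (n + 1 - m) n *
            (∑ k ∈ range (l + 1), (-1 : ℚ) ^ k * (l.choose k : ℚ) * (k.choose m : ℚ)) := by
          rw [Finset.mul_sum]
          apply Finset.sum_congr rfl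
          intro m _
          simp only [Finset.mul_sum]
  have hkey : ∑ k ∈ Finset.Icc 1 l, (-1 : ℚ) ^ k * (l.choose k : ℚ) * A n k
      = ((Nat.factorial (2 * n) : ℚ) / (2 ^ (2 * n) * 6 ^ n)) *
          ((l : ℚ) * P (n + 1 - l) n * (-1 : ℚ) ^ l) := by
    rw [hsum, hswap]
    congr 1
    rw [Finset.sum_eq_single l]
    · rw [alt_inner, if_pos rfl]
    · intro m hm hml
      rw [alt_inner, if_neg hml, mul_zero]
    · intro hl
      simp only [Finset.mem_Icc] at hl
      omega
  rw [hkey]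
  have hl0 : ((l : ℚ)) ≠ 0 := Nat.cast_ne_zero.mpr (by omega)
  have hm1 : (-1 : ℚ) ^ l * (-1 : ℚ) ^ l = 1 := by
    rw [← pow_add]
    exact Even.neg_one_pow ⟨l, rfl⟩
  field_simp
  linear_combination (-P (n + 1 - l) n) * hm1
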